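/- An observable A on state space S is compatible with the identity channel if and only if there is a channel Φ: S → S ⊗̇ P(Ω_A) such that for every extreme point y of S, Φ(y) = Σ_{i=1}^n A_i(y) · (y ⊗ δ_i). -/
import Mathlib


/-- Membership in the cone generated by the state space `S` (the positivity cone). -/
def InCone {V : Type*} [AddCommGroup V] [Module ℝ V] (S : Set V) (x : V) : Prop :=
  ∃ c : ℝ, 0 ≤ c ∧ ∃ t ∈ S, x = c • t

/-- An effect on a state space `S`. -/
def IsEffect {V : Type*} [AddCommGroup V] [Module ℝ V]
    (S : Set V) (e : V →ₗ[ℝ] ℝ) : Prop :=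
  ∀ s ∈ S, 0 ≤ e s ∧ e s ≤ 1

/-- An observable with outcome set `Fin n`. -/
def IsObservable {V : Type*} [AddCommGroup V] [Module ℝ V]
    (S : Set V) (u : V →ₗ[ℝ] ℝ) {n : ℕ} (A : Fin n → (V →ₗ[ℝ] ℝ)) : Prop :=
  (∀ i, IsEffect S (A i)) ∧ ∑ i, A i = u

/-- A channel on `S`: a (linearly extended) affine map sending states to states. -/
def IsChannel {V : Type*} [AddCommGroup V] [Module ℝ V]
    (S : Set V) (Φ : V →ₗ[ℝ] V) : Prop :=
  ∀ s ∈ S, Φ s ∈ S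

/-- An operation: a positive map sending states into the subnormalized states. -/
def IsOperation {V : Type*} [AddCommGroup V] [Module ℝ V]
    (S : Set V) (u : V →ₗ[ℝ] ℝ) (Φ : V →ₗ[ℝ] V) : Prop :=
  ∀ s ∈ S, InCone S (Φ s) ∧ u (Φ s) ≤ 1

/-- The states of the minimal tensor product `S ⊗̇ P(Ω_A)`, identified with tuples
`f : Fin n → V` of positive elements with total weight one (the `i`-th component is
the unnormalized conditional state paired with the point distribution `δ i`). -/
def JointState {V : Type*} [AddCommGroup V] [Module ℝ V]
    (S : Set V) (u : V →ₗ[ℝ] ℝ) {n : ℕ} (f : Fin n → V) : Prop :=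
  (∀ i, InCone S (f i)) ∧ ∑ i, u (f i) = 1

/-- A channel `Φ` and an `n`-outcome observable `A` are compatible: there is a joint
channel `Φ̃ : S → S ⊗̇ P(Ω_A)` whose partial traces `u₂ ∘ Φ̃ = Σᵢ Φ̃(·)ᵢ` and
`u₁ ∘ Φ̃ = (u (Φ̃(·)ᵢ))ᵢ` reproduce `Φ` and `A`. -/
def ChannelObsCompatible {V : Type*} [AddCommGroup V] [Module ℝ V]
    (S : Set V) (u : V →ₗ[ℝ] ℝ) {n : ℕ}
    (Φ : V →ₗ[ℝ] V) (A : Fin n → (V →ₗ[ℝ] ℝ)) : Prop :=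
  ∃ Φt : V →ₗ[ℝ] (Fin n → V),
    (∀ s ∈ S, JointState S u (Φt s)) ∧
    (∀ s ∈ S, ∑ i, Φt s i = Φ s) ∧
    (∀ s ∈ S, ∀ i, u (Φt s i) = A i s)


/-- Lemma 2: an observable `A` is compatible with the identity channel
iff there is a joint channel `Φ : S → S ⊗̇ P(Ω_A)` such that for every extreme point
`y` of `S`, `Φ(y) = ∑ᵢ Aᵢ(y) · (y ⊗ δᵢ)`, i.e. `Φ y i = Aᵢ(y) • y` for all `i`. -/
lemma zero_on_S {V : Type*} [NormedAddCommGroup V] [NormedSpace ℝ V] [FiniteDimensional ℝ V]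
    {W : Type*} [NormedAddCommGroup W] [NormedSpace ℝ W]
    (S : Set V) (hScvx : Convex ℝ S) (hScpt : IsCompact S)
    (L : V →ₗ[ℝ] W) (h : ∀ y ∈ Set.extremePoints ℝ S, L y = 0) :
    ∀ s ∈ S, L s = 0 := by
  have hK : IsClosed {x : V | L x = 0} :=
    isClosed_eq (LinearMap.continuous_of_finiteDimensional L) continuous_const
  have hconv : Convex ℝ {x : V | L x = 0} := by
    intro a ha b hb p q hp hq hpq
    simp only [Set.mem_setOf_eq] at *
    simp [ha, hb, map_add, map_smul]
  have h1 : convexHull ℝ (Set.extremePoints ℝ S) ⊆ {x | L x = 0} :=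
    convexHull_min h hconv
  have h2 : S ⊆ {x | L x = 0} := by
    rw [← closure_convexHull_extremePoints hScpt hScvx]
    exact closure_minimal h1 hK
  exact fun s hs => h2 hs

lemma extreme_smul_eq {V : Type*} [AddCommGroup V] [Module ℝ V]
    {S : Set V} (hScvx : Convex ℝ S) {y : V} (hy : y ∈ Set.extremePoints ℝ S)
    {n : ℕ} (c : Fin n → ℝ) (t : Fin n → V) (hc : ∀ i, 0 ≤ c i)
    (ht : ∀ i, t i ∈ S) (hsum : ∑ i, c i = 1) (hrep : ∑ i, c i • t i = y) :
    ∀ i, c i • t i = c i • y := by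
  intro i
  rcases eq_or_lt_of_le (hc i) with h0 | hpos
  · simp [← h0]
  have hle : c i ≤ 1 := hsum ▸ Finset.single_le_sum (fun j _ => hc j) (Finset.mem_univ i)
  have hadd : c i • t i + ∑ j ∈ Finset.univ.erase i, c j • t j = y :=
    (Finset.add_sum_erase Finset.univ (fun j => c j • t j) (Finset.mem_univ i)).trans hrep
  have haddc : c i + ∑ j ∈ Finset.univ.erase i, c j = 1 :=
    (Finset.add_sum_erase Finset.univ c (Finset.mem_univ i)).trans hsum
  rcases eq_or_lt_of_le hle with h1 | hlt
  · have hz : ∑ j ∈ Finset.univ.erase i, c j = 0 := by linarith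
    have hzero : ∀ j ∈ Finset.univ.erase i, c j = 0 :=
      (Finset.sum_eq_zero_iff_of_nonneg (fun j _ => hc j)).1 hz
    have hz2 : ∑ j ∈ Finset.univ.erase i, c j • t j = 0 :=
      Finset.sum_eq_zero (fun j hj => by rw [hzero j hj, zero_smul])
    rw [hz2, add_zero] at hadd
    rw [hadd, h1, one_smul]
  · set d : ℝ := 1 - c i with hd
    have hdpos : 0 < d := by linarith
    set z : V := d⁻¹ • ∑ j ∈ Finset.univ.erase i, c j • t j with hzdef
    have hzS : z ∈ S := by
      have hmem := hScvx.sum_mem (t := Finset.univ.erase i) (w := fun j => d⁻¹ * c j)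
        (z := t) (fun j _ => mul_nonneg (inv_nonneg.2 hdpos.le) (hc j))
        (by
          rw [← Finset.mul_sum]
          have hsd : ∑ j ∈ Finset.univ.erase i, c j = d := by linarith
          rw [hsd, inv_mul_cancel₀ hdpos.ne'])
        (fun j _ => ht j)
      rw [hzdef, Finset.smul_sum]
      convert hmem using 2 with j
      rw [smul_smul]
    have hseg : y ∈ openSegment ℝ (t i) z := by
      refine ⟨c i, d, hpos, hdpos, by ring, ?_⟩
      rw [hzdef, smul_inv_smul₀ hdpos.ne']
      exact hadd
    rw [mem_extremePoints] at hy
    rw [(hy.2 (t i) (ht i) z hzS hseg).1]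

theorem compatible_with_id_iff_extreme_channel
    {V : Type*} [NormedAddCommGroup V] [NormedSpace ℝ V] [FiniteDimensional ℝ V]
    (S : Set V) (hSne : S.Nonempty) (hScvx : Convex ℝ S) (hScpt : IsCompact S)
    (u : V →ₗ[ℝ] ℝ) (hu : ∀ s ∈ S, u s = 1)
    {n : ℕ} (A : Fin n → (V →ₗ[ℝ] ℝ)) (hA : IsObservable S u A) :
    ChannelObsCompatible S u (LinearMap.id : V →ₗ[ℝ] V) A ↔
      ∃ Φ : V →ₗ[ℝ] (Fin n → V),
        (∀ s ∈ S, JointState S u (Φ s)) ∧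
        ∀ y ∈ Set.extremePoints ℝ S, ∀ i, Φ y i = A i y • y := by
  constructor
  · rintro ⟨Φt, hJ, hsum, hu'⟩
    refine ⟨Φt, hJ, ?_⟩
    intro y hy i
    have hyS : y ∈ S := hy.1
    choose c hc0 t htS heq using (hJ y hyS).1
    have hcval : ∀ i, c i = A i y := by
      intro i
      have h1 : u (Φt y i) = A i y := hu' y hyS i
      rw [heq i, map_smul, smul_eq_mul, hu (t i) (htS i), mul_one] at h1
      exact h1
    have hcsum : ∑ i, c i = 1 := by
      have := (hJ y hyS).2
      calc ∑ i, c i = ∑ i, u (Φt y i) := by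
            refine Finset.sum_congr rfl fun i _ => ?_
            rw [heq i, map_smul, smul_eq_mul, hu (t i) (htS i), mul_one]
        _ = 1 := this
    have hrep : ∑ i, c i • t i = y := by
      have h2 := hsum y hyS
      simp only [LinearMap.id_coe, id_eq] at h2
      calc ∑ i, c i • t i = ∑ i, Φt y i := by
            exact Finset.sum_congr rfl fun i _ => (heq i).symm
        _ = y := h2
    have := extreme_smul_eq hScvx hy c t hc0 htS hcsum hrep i
    rw [heq i, this, hcval i]
  · rintro ⟨Φ, hJ, hext⟩
    refine ⟨Φ, hJ, ?_, ?_⟩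
    · -- sum condition
      set L : V →ₗ[ℝ] V :=
        (∑ i, (LinearMap.proj i).comp Φ) - LinearMap.id with hL
      have happ : ∀ x, L x = (∑ i, Φ x i) - x := by
        intro x
        simp [hL, LinearMap.sum_apply]
      have hLz : ∀ y ∈ Set.extremePoints ℝ S, L y = 0 := by
        intro y hy
        rw [happ]
        have : ∑ i, Φ y i = ∑ i, A i y • y :=
          Finset.sum_congr rfl fun i _ => hext y hy i
        rw [this, ← Finset.sum_smul]
        have hsA : ∑ i, A i y = u y := by
          rw [← hA.2]; simp [LinearMap.sum_apply]
        rw [hsA, hu y hy.1, one_smul, sub_self]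
      intro s hs
      have := zero_on_S S hScvx hScpt L hLz s hs
      rw [happ] at this
      simpa [sub_eq_zero] using this
    · -- marginal condition
      intro s hs i
      set L : V →ₗ[ℝ] ℝ := u.comp ((LinearMap.proj i).comp Φ) - A i with hL
      have happ : ∀ x, L x = u (Φ x i) - A i x := by
        intro x; simp [hL]
      have hLz : ∀ y ∈ Set.extremePoints ℝ S, L y = 0 := by
        intro y hy
        rw [happ, hext y hy i, map_smul, smul_eq_mul, hu y hy.1, mul_one, sub_self]
      have := zero_on_S S hScvx hScpt L hLz s hs
      rw [happ] at this
      linarith
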